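/- Let T ∈ (0,∞), h ∈ (0, T], r ∈ [0,∞), ρ ∈ (0,∞), and γ ∈ [0,∞). Then inf_{κ ∈ (0,T]} max{ 4·κ^{ρ/2}, 57 · max{1, κ^{−3γ}} · h^{r} } ≤ 57 · h^{ ρ·r / (ρ + 6γ) } / ( min{T, 1/T} )^{ (r + 3γ) }. (In the paper γ = θ − ϑ; a suitable choice is κ = min{1,T}·(h/T)^{2r/(ρ+6γ)}.) -/

import Mathlib

/-- For `T ∈ (0,∞)`, `h ∈ (0,T]`, `r ∈ [0,∞)`, `ρ ∈ (0,∞)`, `γ ∈ [0,∞)`: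
`inf_{κ ∈ (0,T]} max{4κ^{ρ/2}, 57 max{1, κ^{-3γ}} h^r}
  ≤ 57 h^{ρr/(ρ+6γ)} / (min{T, 1/T})^{r+3γ}`. -/
theorem stmt_13 (T h r ρ γ : ℝ) (hT : 0 < T) (hh : h ∈ Set.Ioc (0 : ℝ) T)
    (hr : 0 ≤ r) (hρ : 0 < ρ) (hγ : 0 ≤ γ) :
    (⨅ κ : Set.Ioc (0 : ℝ) T,
        max (4 * (κ : ℝ) ^ (ρ / 2)) (57 * max 1 ((κ : ℝ) ^ (-(3 * γ))) * h ^ r))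
      ≤ 57 * h ^ (ρ * r / (ρ + 6 * γ)) / (min T (1 / T)) ^ (r + 3 * γ) := by
  obtain ⟨hh0, hhT⟩ := hh
  have hA : 0 < ρ + 6 * γ := by linarith
  set s := ρ * r / (ρ + 6 * γ) with hs_def
  set t := 6 * γ * r / (ρ + 6 * γ) with ht_def
  have hst : s + t = r := by
    rw [hs_def, ht_def]; field_simp
  have hs0 : 0 ≤ s := by positivity
  have ht0 : 0 ≤ t := by positivity
  have hsr : s ≤ r := by linarith
  set α := 2 * r / (ρ + 6 * γ) with hα_def
  have hα0 : 0 ≤ α := by positivity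
  set M := min 1 T with hM_def
  have hM0 : 0 < M := lt_min one_pos hT
  have hM1 : M ≤ 1 := min_le_left _ _
  have hMT : M ≤ T := min_le_right _ _
  set m := min T (1 / T) with hm_def
  have hm0 : 0 < m := lt_min hT (by positivity)
  set q := (h / T) ^ α with hq_def
  have hhT1 : h / T ≤ 1 := (div_le_one hT).2 hhT
  have hhT0 : 0 < h / T := div_pos hh0 hT
  have hq0 : 0 < q := Real.rpow_pos_of_pos hhT0 _
  have hq1 : q ≤ 1 := Real.rpow_le_one hhT0.le hhT1 hα0
  set κ₀ := M * q with hκ_def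
  have hκ0 : 0 < κ₀ := mul_pos hM0 hq0
  have hκT : κ₀ ≤ T := le_trans (mul_le_of_le_one_right hM0.le hq1) hMT
  have hκ1 : κ₀ ≤ 1 := le_trans (mul_le_of_le_one_right hM0.le hq1) hM1
  -- Key inequalities
  have key1 : M ^ (ρ / 2) * T ^ (-s) * m ^ (r + 3 * γ) ≤ 1 := by
    rcases le_total 1 T with h1T | hT1
    · have hM : M = 1 := min_eq_left h1T
      have hm' : m = 1 / T := min_eq_right (by
        rw [one_div]
        calc T⁻¹ ≤ 1 := inv_le_one_of_one_le₀ h1T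
          _ ≤ T := h1T)
      rw [hM, hm', Real.one_rpow, one_mul, one_div, Real.inv_rpow hT.le]
      have h1 : T ^ (-s) ≤ 1 :=
        Real.rpow_le_one_of_one_le_of_nonpos h1T (by linarith)
      have h2 : (T ^ (r + 3 * γ))⁻¹ ≤ 1 := by
        rw [inv_le_one_iff₀]
        right
        exact Real.one_le_rpow h1T (by linarith)
      have hp1 : 0 ≤ T ^ (-s) := Real.rpow_nonneg hT.le _
      have hp2 : 0 ≤ (T ^ (r + 3 * γ))⁻¹ := by positivity
      nlinarith
    · have hM : M = T := min_eq_right hT1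
      have hm' : m = T := min_eq_left (by
        rw [one_div]
        calc T ≤ 1 := hT1
          _ ≤ T⁻¹ := (one_le_inv₀ hT).2 hT1)
      rw [hM, hm', ← Real.rpow_add hT, ← Real.rpow_add hT]
      exact Real.rpow_le_one hT.le hT1 (by linarith)
  have key2 : M ^ (-(3 * γ)) * T ^ t * m ^ (r + 3 * γ) ≤ 1 := by
    rcases le_total 1 T with h1T | hT1
    · have hM : M = 1 := min_eq_left h1T
      have hm' : m = 1 / T := min_eq_right (by
        rw [one_div]
        calc T⁻¹ ≤ 1 := inv_le_one_of_one_le₀ h1T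
          _ ≤ T := h1T)
      rw [hM, hm', Real.one_rpow, one_mul, one_div, Real.inv_rpow hT.le,
        ← Real.rpow_neg hT.le, ← Real.rpow_add hT]
      exact Real.rpow_le_one_of_one_le_of_nonpos h1T (by linarith)
    · have hM : M = T := min_eq_right hT1
      have hm' : m = T := min_eq_left (by
        rw [one_div]
        calc T ≤ 1 := hT1
          _ ≤ T⁻¹ := (one_le_inv₀ hT).2 hT1)
      rw [hM, hm', ← Real.rpow_add hT, ← Real.rpow_add hT]
      exact Real.rpow_le_one hT.le hT1 (by linarith)
  -- infimum is at most value at κ₀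
  have hbdd : BddBelow (Set.range fun κ : Set.Ioc (0 : ℝ) T =>
      max (4 * (κ : ℝ) ^ (ρ / 2)) (57 * max 1 ((κ : ℝ) ^ (-(3 * γ))) * h ^ r)) := by
    refine ⟨0, ?_⟩
    rintro x ⟨κ, rfl⟩
    exact le_max_of_le_left (mul_nonneg (by norm_num) (Real.rpow_nonneg κ.2.1.le _))
  refine le_trans (ciInf_le hbdd ⟨κ₀, hκ0, hκT⟩) ?_
  -- now bound the value at κ₀
  have hmr : 0 < m ^ (r + 3 * γ) := Real.rpow_pos_of_pos hm0 _
  rw [max_le_iff]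
  have hhs : 0 < h ^ s := Real.rpow_pos_of_pos hh0 _
  constructor
  · -- first branch
    rw [le_div_iff₀ hmr]
    have hκexp : (κ₀ : ℝ) ^ (ρ / 2) = M ^ (ρ / 2) * (h ^ s * T ^ (-s)) := by
      rw [hκ_def, Real.mul_rpow hM0.le hq0.le, hq_def, ← Real.rpow_mul hhT0.le]
      have : α * (ρ / 2) = s := by rw [hα_def, hs_def]; field_simp
      rw [this, Real.div_rpow hh0.le hT.le, Real.rpow_neg hT.le]
      ring
    rw [hκexp]
    calc 4 * (M ^ (ρ / 2) * (h ^ s * T ^ (-s))) * m ^ (r + 3 * γ)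
        = 4 * h ^ s * (M ^ (ρ / 2) * T ^ (-s) * m ^ (r + 3 * γ)) := by ring
      _ ≤ 4 * h ^ s * 1 := by
          apply mul_le_mul_of_nonneg_left key1 (by positivity)
      _ ≤ 57 * h ^ s := by nlinarith
  · -- second branch
    have hmax : max 1 ((κ₀ : ℝ) ^ (-(3 * γ))) = κ₀ ^ (-(3 * γ)) :=
      max_eq_right (Real.one_le_rpow_of_pos_of_le_one_of_nonpos hκ0 hκ1 (by linarith))
    rw [hmax, le_div_iff₀ hmr]
    have hκexp : (κ₀ : ℝ) ^ (-(3 * γ)) = M ^ (-(3 * γ)) * (h ^ (-t) * T ^ t) := by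
      rw [hκ_def, Real.mul_rpow hM0.le hq0.le, hq_def, ← Real.rpow_mul hhT0.le]
      have : α * (-(3 * γ)) = -t := by
        rw [hα_def, ht_def]; field_simp; ring
      rw [this, Real.div_rpow hh0.le hT.le, Real.rpow_neg hT.le t,
        div_eq_mul_inv, inv_inv]
    have hhr : h ^ r = h ^ s * h ^ t := by rw [← hst, Real.rpow_add hh0]
    have hcancel : h ^ (-t) * h ^ t = 1 := by
      rw [← Real.rpow_add hh0]; simp
    rw [hκexp, hhr]
    calc 57 * (M ^ (-(3 * γ)) * (h ^ (-t) * T ^ t)) * (h ^ s * h ^ t) * m ^ (r + 3 * γ)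
        = 57 * h ^ s * ((h ^ (-t) * h ^ t) * (M ^ (-(3 * γ)) * T ^ t * m ^ (r + 3 * γ))) := by
          ring
      _ = 57 * h ^ s * (M ^ (-(3 * γ)) * T ^ t * m ^ (r + 3 * γ)) := by rw [hcancel, one_mul]
      _ ≤ 57 * h ^ s * 1 := mul_le_mul_of_nonneg_left key2 (by positivity)
      _ = 57 * h ^ s := mul_one _
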